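/- Let G be an amply regular graph with parameters (n, d, α, β) with α = 1 and β > 1. Then diam(G) ≤ 2d/3. -/

import Mathlib

open Finset SimpleGraph

variable {V : Type*} [Fintype V] [DecidableEq V]

/-- A graph is amply regular with parameters `(n, d, a, b)` if it is `d`-regular on `n`
vertices, adjacent vertices have exactly `a` common neighbors, and vertices at distance 2
have exactly `b` common neighbors. -/
def SimpleGraph.IsAmplyRegular (G : SimpleGraph V) [DecidableRel G.Adj]
    (n d a b : ℕ) : Prop :=
  Fintype.card V = n ∧ G.IsRegularOfDegree d ∧
    (∀ x y, G.Adj x y → (G.neighborFinset x ∩ G.neighborFinset y).card = a) ∧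
    (∀ x y, G.dist x y = 2 → (G.neighborFinset x ∩ G.neighborFinset y).card = b)

/-- The measure `μ_x^p` giving mass `p` to `x` and `(1-p)/deg x` to each neighbor of `x`. -/
noncomputable def muMeasure (G : SimpleGraph V) [DecidableRel G.Adj] (p : ℝ) (x : V) :
    V → ℝ :=
  fun v => if v = x then p else if G.Adj x v then (1 - p) / (G.degree x : ℝ) else 0

/-- `pi` is a transport plan between `mu1` and `mu2`. -/
def IsTransportPlan (mu1 mu2 : V → ℝ) (pi : V → V → ℝ) : Prop :=
  (∀ u v, 0 ≤ pi u v) ∧ (∀ u, ∑ v, pi u v = mu1 u) ∧ (∀ v, ∑ u, pi u v = mu2 v)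

/-- The 1-Wasserstein distance between two measures w.r.t. the graph distance. -/
noncomputable def W1 (G : SimpleGraph V) (mu1 mu2 : V → ℝ) : ℝ :=
  sInf {c : ℝ | ∃ pi, IsTransportPlan mu1 mu2 pi ∧
    c = ∑ u, ∑ v, (G.dist u v : ℝ) * pi u v}

/-- The Lin-Lu-Yau curvature of an edge of a `d`-regular graph, via the idleness
`p = 1/(d+1)` formula of Bourne et al. -/
noncomputable def kappaLLY (G : SimpleGraph V) [DecidableRel G.Adj] (d : ℕ) (x y : V) :
    ℝ :=
  ((d + 1 : ℝ) / d) *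
    (1 - W1 G (muMeasure G (1 / (d + 1 : ℝ)) x) (muMeasure G (1 / (d + 1 : ℝ)) y))

/-- `N_x = Γ(x) \ ({y} ∪ Γ(y))`. -/
def Nset (G : SimpleGraph V) [DecidableRel G.Adj] (x y : V) : Finset V :=
  G.neighborFinset x \ insert y (G.neighborFinset y)

/-- `Δ_{xy} = Γ(x) ∩ Γ(y)`. -/
def Dset (G : SimpleGraph V) [DecidableRel G.Adj] (x y : V) : Finset V :=
  G.neighborFinset x ∩ G.neighborFinset y

lemma aux_exists_perm_extend {s t : Finset V} (f : V → V)
    (hinj : Set.InjOn f s) (himg : s.image f = t) :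
    ∃ σ : Equiv.Perm V, ∀ a ∈ s, σ a = f a := by
  have hst : s.card = t.card := by
    rw [← himg, Finset.card_image_of_injOn hinj]
  have hcard : (sᶜ : Finset V).card = (tᶜ : Finset V).card := by
    rw [Finset.card_compl, Finset.card_compl, hst]
  let g := Finset.equivOfCardEq hcard
  have hmem : ∀ v : V, v ∉ s → v ∈ (sᶜ : Finset V) := by intro v hv; simpa using hv
  let F : V → V := fun v => if h : v ∈ s then f v else (g ⟨v, hmem v h⟩ : V)
  have hFin : ∀ a, a ∈ s → F a = f a := by intro a ha; simp only [F]; rw [dif_pos ha]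
  have hFout : ∀ a (ha : a ∉ s), F a = (g ⟨a, hmem a ha⟩ : V) := by
    intro a ha; simp only [F]; rw [dif_neg ha]
  have hft : ∀ a, a ∈ s → f a ∈ t := fun a ha => himg ▸ Finset.mem_image_of_mem f ha
  have hgt : ∀ a (ha : a ∉ s), (g ⟨a, hmem a ha⟩ : V) ∉ t :=
    fun a ha => Finset.mem_compl.mp (g ⟨a, hmem a ha⟩).2
  have hFinj : Function.Injective F := by
    intro a c hac
    by_cases ha : a ∈ s <;> by_cases hc : c ∈ s
    · rw [hFin a ha, hFin c hc] at hac; exact hinj ha hc hac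
    · rw [hFin a ha, hFout c hc] at hac
      exact absurd (hac ▸ hft a ha) (hgt c hc)
    · rw [hFout a ha, hFin c hc] at hac
      exact absurd (hac ▸ hgt a ha) (by simp [hft c hc])
    · rw [hFout a ha, hFout c hc] at hac
      have := g.injective (Subtype.ext hac)
      exact congrArg Subtype.val this
  have hFbij : Function.Bijective F := Finite.injective_iff_bijective.mp hFinj
  refine ⟨Equiv.ofBijective F hFbij, fun a ha => ?_⟩
  simpa [Equiv.ofBijective] using hFin a ha

lemma aux_two_le_d (G : SimpleGraph V) [DecidableRel G.Adj] {d : ℕ}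
    (hreg : G.IsRegularOfDegree d)
    (h3 : ∀ x y, G.Adj x y → (G.neighborFinset x ∩ G.neighborFinset y).card = 1)
    {x y : V} (hxy : G.Adj x y) : 2 ≤ d := by
  obtain ⟨z, hz⟩ := Finset.card_eq_one.mp (h3 x y hxy)
  have hzmem : z ∈ G.neighborFinset x ∩ G.neighborFinset y := hz ▸ Finset.mem_singleton_self z
  rw [Finset.mem_inter, mem_neighborFinset, mem_neighborFinset] at hzmem
  have hne : y ≠ z := fun h => G.irrefl (h ▸ hzmem.2)
  have hsub : ({y, z} : Finset V) ⊆ G.neighborFinset x := by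
    intro w hw
    rcases Finset.mem_insert.mp hw with h | h
    · subst h; exact (mem_neighborFinset G x w).mpr hxy
    · rw [Finset.mem_singleton] at h; subst h; exact (mem_neighborFinset G x w).mpr hzmem.1
  calc 2 = ({y, z} : Finset V).card := (Finset.card_pair hne).symm
  _ ≤ (G.neighborFinset x).card := Finset.card_le_card hsub
  _ = d := hreg x

lemma aux_deg_into (G : SimpleGraph V) [DecidableRel G.Adj] {b : ℕ}
    (h3 : ∀ x y, G.Adj x y → (G.neighborFinset x ∩ G.neighborFinset y).card = 1)
    (h4 : ∀ x y, G.dist x y = 2 → (G.neighborFinset x ∩ G.neighborFinset y).card = b)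
    {x y : V} (hxy : G.Adj x y) {u : V} (hu : u ∈ Nset G x y) :
    (G.neighborFinset u ∩ Nset G y x).card = b - 1 := by
  simp only [Nset, Finset.mem_sdiff, Finset.mem_insert, mem_neighborFinset] at hu
  push_neg at hu
  obtain ⟨hxu, huy, hyu⟩ := hu
  have hdyu : G.dist y u = 2 := by
    have hreach : G.Reachable y u := ⟨Walk.cons hxy.symm (Walk.cons hxu Walk.nil)⟩
    have hle : G.dist y u ≤ 2 :=
      G.dist_le (Walk.cons hxy.symm (Walk.cons hxu Walk.nil))
    have h0 : G.dist y u ≠ 0 := by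
      rw [SimpleGraph.dist_ne_zero_iff_ne_and_reachable]
      exact ⟨fun h => huy h.symm, hreach⟩
    have h1 : G.dist y u ≠ 1 := fun h => hyu (SimpleGraph.dist_eq_one_iff_adj.mp h)
    omega
  have hb2 := h4 y u hdyu
  have hx_mem : x ∈ G.neighborFinset y ∩ G.neighborFinset u := by
    rw [Finset.mem_inter, mem_neighborFinset, mem_neighborFinset]
    exact ⟨hxy.symm, hxu.symm⟩
  have hset : G.neighborFinset u ∩ Nset G y x
      = (G.neighborFinset y ∩ G.neighborFinset u).erase x := by
    ext w
    simp only [Nset, Finset.mem_inter, Finset.mem_sdiff, Finset.mem_erase, Finset.mem_insert,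
      mem_neighborFinset]
    constructor
    · rintro ⟨huw, hyw, hw2⟩
      push_neg at hw2
      exact ⟨hw2.1, hyw, huw⟩
    · rintro ⟨hwx, hyw, huw⟩
      refine ⟨huw, hyw, ?_⟩
      push_neg
      refine ⟨hwx, fun hxw => ?_⟩
      -- w is adjacent to x; both y and u are common neighbors of x and w, so y = u
      have hcard := h3 x w hxw
      have hy' : y ∈ G.neighborFinset x ∩ G.neighborFinset w := by
        rw [Finset.mem_inter, mem_neighborFinset, mem_neighborFinset]
        exact ⟨hxy, hyw.symm⟩
      have hu' : u ∈ G.neighborFinset x ∩ G.neighborFinset w := by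
        rw [Finset.mem_inter, mem_neighborFinset, mem_neighborFinset]
        exact ⟨hxu, huw.symm⟩
      exact absurd (Finset.card_le_one.mp (le_of_eq hcard) u hu' y hy') huy
  rw [hset, Finset.card_erase_of_mem hx_mem, hb2]

lemma aux_Nset_card (G : SimpleGraph V) [DecidableRel G.Adj] {d : ℕ}
    (hreg : G.IsRegularOfDegree d)
    (h3 : ∀ x y, G.Adj x y → (G.neighborFinset x ∩ G.neighborFinset y).card = 1)
    {x y : V} (hxy : G.Adj x y) : (Nset G x y).card = d - 2 := by
  obtain ⟨z, hz⟩ := Finset.card_eq_one.mp (h3 x y hxy)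
  have hzmem : z ∈ G.neighborFinset x ∩ G.neighborFinset y := hz ▸ Finset.mem_singleton_self z
  rw [Finset.mem_inter, mem_neighborFinset, mem_neighborFinset] at hzmem
  have hne : y ≠ z := fun h => G.irrefl (h ▸ hzmem.2)
  have hinter : G.neighborFinset x ∩ insert y (G.neighborFinset y) = {y, z} := by
    ext w
    simp only [Finset.mem_inter, Finset.mem_insert, mem_neighborFinset, Finset.mem_singleton]
    constructor
    · rintro ⟨hxw, h | h⟩
      · exact Or.inl h
      · right
        have : w ∈ G.neighborFinset x ∩ G.neighborFinset y := by
          rw [Finset.mem_inter, mem_neighborFinset, mem_neighborFinset]; exact ⟨hxw, h⟩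
        rw [hz, Finset.mem_singleton] at this; exact this
    · rintro (h | h)
      · subst h; exact ⟨hxy, Or.inl rfl⟩
      · subst h; exact ⟨hzmem.1, Or.inr hzmem.2⟩
  have hsub : ({y, z} : Finset V) ⊆ G.neighborFinset x := by
    rw [← hinter]; exact Finset.inter_subset_left
  have : Nset G x y = G.neighborFinset x \ ({y, z} : Finset V) := by
    rw [Nset, ← Finset.sdiff_inter_self_left, hinter]
  rw [this, Finset.card_sdiff_of_subset hsub, Finset.card_pair hne, card_neighborFinset_eq_degree, hreg x]

lemma aux_edge_perm (G : SimpleGraph V) [DecidableRel G.Adj] {d b : ℕ}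
    (hreg : G.IsRegularOfDegree d)
    (h3 : ∀ x y, G.Adj x y → (G.neighborFinset x ∩ G.neighborFinset y).card = 1)
    (h4 : ∀ x y, G.dist x y = 2 → (G.neighborFinset x ∩ G.neighborFinset y).card = b)
    (hb : 1 < b) {x y : V} (hxy : G.Adj x y) :
    ∃ σ : Equiv.Perm V,
      (∀ v ∈ insert x (G.neighborFinset x), σ v ∈ insert y (G.neighborFinset y)) ∧
      ∑ v ∈ insert x (G.neighborFinset x), G.dist v (σ v) ≤ d - 2 := by
  classical
  set Nx := Nset G x y with hNx
  set Ny := Nset G y x with hNy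
  -- Hall's theorem setup
  set T : {u // u ∈ Nx} → Finset V := fun u => G.neighborFinset u.1 ∩ Ny with hT
  have hTcard : ∀ u : {u // u ∈ Nx}, (T u).card = b - 1 :=
    fun u => aux_deg_into G h3 h4 hxy u.2
  have hrev : ∀ v ∈ Ny, (G.neighborFinset v ∩ Nx).card = b - 1 :=
    fun v hv => aux_deg_into G h3 h4 hxy.symm hv
  have hall : ∀ S : Finset {u // u ∈ Nx}, S.card ≤ (S.biUnion T).card := by
    intro S
    have key : (b - 1) * S.card ≤ (b - 1) * (S.biUnion T).card := by
      have e2 : ∀ u ∈ S, (T u).card = ∑ v ∈ S.biUnion T, if v ∈ T u then 1 else 0 := by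
        intro u hu
        rw [← Finset.card_filter, Finset.filter_mem_eq_inter,
          Finset.inter_eq_right.mpr (Finset.subset_biUnion_of_mem T hu)]
      have bound : ∀ v ∈ S.biUnion T, (∑ u ∈ S, if v ∈ T u then 1 else 0) ≤ b - 1 := by
        intro v hv
        obtain ⟨u₀, _, hvu₀⟩ := Finset.mem_biUnion.mp hv
        have hvNy : v ∈ Ny := (Finset.mem_inter.mp hvu₀).2
        rw [← Finset.card_filter]
        have := hrev v hvNy
        rw [← this]
        apply Finset.card_le_card_of_injOn Subtype.val
        · intro u hu
          rw [Finset.mem_coe, Finset.mem_filter] at hu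
          rw [Finset.mem_coe, Finset.mem_inter, mem_neighborFinset]
          have hadj : G.Adj u.1 v := (mem_neighborFinset G u.1 v).mp (Finset.mem_inter.mp hu.2).1
          exact ⟨hadj.symm, u.2⟩
        · exact fun a _ c _ h => Subtype.ext h
      calc (b - 1) * S.card = ∑ _u ∈ S, (b - 1) := by
            rw [Finset.sum_const, smul_eq_mul, mul_comm]
        _ = ∑ u ∈ S, (T u).card := Finset.sum_congr rfl (fun u _ => (hTcard u).symm)
        _ = ∑ u ∈ S, ∑ v ∈ S.biUnion T, (if v ∈ T u then 1 else 0) := Finset.sum_congr rfl e2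
        _ = ∑ v ∈ S.biUnion T, ∑ u ∈ S, (if v ∈ T u then 1 else 0) := Finset.sum_comm
        _ ≤ ∑ _v ∈ S.biUnion T, (b - 1) := Finset.sum_le_sum bound
        _ = (b - 1) * (S.biUnion T).card := by rw [Finset.sum_const, smul_eq_mul, mul_comm]
    exact Nat.le_of_mul_le_mul_left key (by omega)
  obtain ⟨f, hfinj, hfmem⟩ := (Finset.all_card_le_biUnion_card_iff_exists_injective T).mp hall
  -- the common neighbor z
  obtain ⟨z, hz⟩ := Finset.card_eq_one.mp (h3 x y hxy)
  have hzmem : z ∈ G.neighborFinset x ∩ G.neighborFinset y := hz ▸ Finset.mem_singleton_self z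
  rw [Finset.mem_inter, mem_neighborFinset, mem_neighborFinset] at hzmem
  obtain ⟨hxz, hyz⟩ := hzmem
  -- vertices of the closed ball not in Nx
  have htriple : ∀ v ∈ insert x (G.neighborFinset x), v ∉ Nx → v = x ∨ v = y ∨ v = z := by
    intro v hv hvn
    rcases Finset.mem_insert.mp hv with h | h
    · exact Or.inl h
    · right
      rw [hNx, Nset, Finset.mem_sdiff] at hvn
      push_neg at hvn
      rcases Finset.mem_insert.mp (hvn h) with h' | h'
      · exact Or.inl h'
      · right
        have : v ∈ G.neighborFinset x ∩ G.neighborFinset y := Finset.mem_inter.mpr ⟨h, h'⟩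
        rw [hz, Finset.mem_singleton] at this
        exact this
  have hxNy : x ∉ Ny := by simp [hNy, Nset]
  have hyNy : y ∉ Ny := by simp [hNy, Nset]
  have hzNy : z ∉ Ny := by
    rw [hNy, Nset, Finset.mem_sdiff]
    push_neg
    intro _
    exact Finset.mem_insert_of_mem ((mem_neighborFinset G x z).mpr hxz)
  have hOutNy : ∀ v ∈ insert x (G.neighborFinset x), v ∉ Nx → v ∉ Ny := by
    intro v hv hvn
    rcases htriple v hv hvn with h | h | h <;> subst h <;> assumption
  -- the map f₀
  set f₀ : V → V := fun v => if h : v ∈ Nx then f ⟨v, h⟩ else v with hf₀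
  have hf₀in : ∀ v (h : v ∈ Nx), f₀ v = f ⟨v, h⟩ := by
    intro v h; simp only [hf₀]; rw [dif_pos h]
  have hf₀out : ∀ v, v ∉ Nx → f₀ v = v := by
    intro v h; simp only [hf₀]; rw [dif_neg h]
  have hfNy : ∀ u : {u // u ∈ Nx}, f u ∈ Ny := fun u => (Finset.mem_inter.mp (hfmem u)).2
  have hfadj : ∀ u : {u // u ∈ Nx}, G.Adj u.1 (f u) :=
    fun u => (mem_neighborFinset G u.1 (f u)).mp (Finset.mem_inter.mp (hfmem u)).1
  have hNxsub : Nx ⊆ insert x (G.neighborFinset x) := by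
    intro v hv
    rw [hNx, Nset, Finset.mem_sdiff] at hv
    exact Finset.mem_insert_of_mem hv.1
  have hNysub : Ny ⊆ insert y (G.neighborFinset y) := by
    intro v hv
    rw [hNy, Nset, Finset.mem_sdiff] at hv
    exact Finset.mem_insert_of_mem hv.1
  have hinj : Set.InjOn f₀ (insert x (G.neighborFinset x) : Finset V) := by
    intro a ha c hc hac
    rw [Finset.mem_coe] at ha hc
    by_cases h1 : a ∈ Nx <;> by_cases h2 : c ∈ Nx
    · rw [hf₀in a h1, hf₀in c h2] at hac
      exact congrArg Subtype.val (hfinj hac)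
    · rw [hf₀in a h1, hf₀out c h2] at hac
      exfalso; apply hOutNy c hc h2; rw [← hac]; exact hfNy ⟨a, h1⟩
    · rw [hf₀out a h1, hf₀in c h2] at hac
      exfalso; apply hOutNy a ha h1; rw [hac]; exact hfNy ⟨c, h2⟩
    · rwa [hf₀out a h1, hf₀out c h2] at hac
  have hmapsto : ∀ v ∈ insert x (G.neighborFinset x), f₀ v ∈ insert y (G.neighborFinset y) := by
    intro v hv
    by_cases h1 : v ∈ Nx
    · rw [hf₀in v h1]; exact hNysub (hfNy ⟨v, h1⟩)
    · rw [hf₀out v h1]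
      rcases htriple v hv h1 with h | h | h <;> subst h
      · exact Finset.mem_insert_of_mem ((mem_neighborFinset G y v).mpr hxy.symm)
      · exact Finset.mem_insert_self v _
      · exact Finset.mem_insert_of_mem ((mem_neighborFinset G y v).mpr hyz)
  have hcards : (insert x (G.neighborFinset x)).card = (insert y (G.neighborFinset y)).card := by
    rw [Finset.card_insert_of_notMem (G.notMem_neighborFinset_self x),
      Finset.card_insert_of_notMem (G.notMem_neighborFinset_self y),
      card_neighborFinset_eq_degree, card_neighborFinset_eq_degree, hreg x, hreg y]
  have himg : (insert x (G.neighborFinset x)).image f₀ = insert y (G.neighborFinset y) := by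
    apply Finset.eq_of_subset_of_card_le
    · intro w hw
      obtain ⟨v, hv, rfl⟩ := Finset.mem_image.mp hw
      exact hmapsto v hv
    · rw [Finset.card_image_of_injOn hinj, hcards]
  obtain ⟨σ, hσ⟩ := aux_exists_perm_extend f₀ hinj himg
  refine ⟨σ, fun v hv => ?_, ?_⟩
  · rw [hσ v hv]; exact hmapsto v hv
  · calc ∑ v ∈ insert x (G.neighborFinset x), G.dist v (σ v)
        ≤ ∑ v ∈ insert x (G.neighborFinset x), (if v ∈ Nx then 1 else 0) := by
          apply Finset.sum_le_sum
          intro v hv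
          rw [hσ v hv]
          by_cases h1 : v ∈ Nx
          · rw [if_pos h1, hf₀in v h1]
            exact le_of_eq (SimpleGraph.dist_eq_one_iff_adj.mpr (hfadj ⟨v, h1⟩))
          · rw [if_neg h1, hf₀out v h1, SimpleGraph.dist_self]
      _ = Nx.card := by
          rw [← Finset.card_filter, Finset.filter_mem_eq_inter,
            Finset.inter_eq_right.mpr hNxsub]
      _ = d - 2 := aux_Nset_card G hreg h3 hxy

lemma aux_walk_perm (G : SimpleGraph V) [DecidableRel G.Adj] {d b : ℕ}
    (hconn : G.Connected) (hreg : G.IsRegularOfDegree d)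
    (h3 : ∀ x y, G.Adj x y → (G.neighborFinset x ∩ G.neighborFinset y).card = 1)
    (h4 : ∀ x y, G.dist x y = 2 → (G.neighborFinset x ∩ G.neighborFinset y).card = b)
    (hb : 1 < b) {xa xc : V} (p : G.Walk xa xc) :
    ∃ σ : Equiv.Perm V,
      (∀ v ∈ insert xa (G.neighborFinset xa), σ v ∈ insert xc (G.neighborFinset xc)) ∧
      ∑ v ∈ insert xa (G.neighborFinset xa), G.dist v (σ v) ≤ p.length * (d - 2) := by
  induction p with
  | nil => exact ⟨Equiv.refl V, fun v hv => hv, by simp⟩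
  | @cons u v w huv q ih =>
    obtain ⟨σ₁, hσ₁mem, hσ₁sum⟩ := aux_edge_perm G hreg h3 h4 hb huv
    obtain ⟨σ₂, hσ₂mem, hσ₂sum⟩ := ih
    refine ⟨σ₁.trans σ₂, fun a ha => hσ₂mem _ (hσ₁mem a ha), ?_⟩
    have step1 : ∑ a ∈ insert u (G.neighborFinset u), G.dist a (σ₂ (σ₁ a))
        ≤ ∑ a ∈ insert u (G.neighborFinset u), (G.dist a (σ₁ a) + G.dist (σ₁ a) (σ₂ (σ₁ a))) :=
      Finset.sum_le_sum fun a _ => hconn.dist_triangle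
    have step2 : ∑ a ∈ insert u (G.neighborFinset u), G.dist (σ₁ a) (σ₂ (σ₁ a))
        ≤ ∑ w' ∈ insert v (G.neighborFinset v), G.dist w' (σ₂ w') := by
      have himg : ∑ a ∈ insert u (G.neighborFinset u), G.dist (σ₁ a) (σ₂ (σ₁ a))
          = ∑ w' ∈ (insert u (G.neighborFinset u)).image σ₁, G.dist w' (σ₂ w') :=
        (Finset.sum_image (f := fun w' => G.dist w' (σ₂ w')) (fun a _ c _ h => σ₁.injective h)).symm
      rw [himg]
      apply Finset.sum_le_sum_of_subset
      intro w' hw'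
      obtain ⟨a, ha, rfl⟩ := Finset.mem_image.mp hw'
      exact hσ₁mem a ha
    calc ∑ a ∈ insert u (G.neighborFinset u), G.dist a ((σ₁.trans σ₂) a)
        = ∑ a ∈ insert u (G.neighborFinset u), G.dist a (σ₂ (σ₁ a)) := rfl
      _ ≤ ∑ a ∈ insert u (G.neighborFinset u), (G.dist a (σ₁ a) + G.dist (σ₁ a) (σ₂ (σ₁ a))) :=
          step1
      _ = (∑ a ∈ insert u (G.neighborFinset u), G.dist a (σ₁ a))
          + ∑ a ∈ insert u (G.neighborFinset u), G.dist (σ₁ a) (σ₂ (σ₁ a)) :=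
          Finset.sum_add_distrib
      _ ≤ (d - 2) + q.length * (d - 2) := Nat.add_le_add hσ₁sum (le_trans step2 hσ₂sum)
      _ = (Walk.cons huv q).length * (d - 2) := by
          rw [Walk.length_cons]; ring

/-- A connected amply regular graph with `α = 1 < β` has diameter at most `2d/3`. -/
theorem stmt13 (G : SimpleGraph V) [DecidableRel G.Adj] {n d a b : ℕ}
    (h : G.IsAmplyRegular n d a b) (ha : a = 1) (hb : 1 < b) (hconn : G.Connected) :
    (G.diam : ℝ) ≤ 2 * d / 3 := by
  obtain ⟨hn, hreg, h3, h4⟩ := h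
  subst ha
  have hne : Nonempty V := hconn.nonempty
  suffices hkey : 3 * G.diam ≤ 2 * d by
    have hc := (Nat.cast_le (α := ℝ)).mpr hkey
    push_cast at hc
    linarith
  obtain ⟨u, w, huw⟩ := SimpleGraph.exists_dist_eq_diam (G := G)
  set t := G.diam with htdef
  by_cases ht0 : t = 0
  · omega
  -- t ≥ 1
  obtain ⟨p, hp⟩ := hconn.exists_walk_length_eq_dist u w
  rw [huw] at hp
  have hd2 : 2 ≤ d := by
    cases p with
    | nil => rw [Walk.length_nil] at hp; omega
    | cons huv q => exact aux_two_le_d G hreg h3 huv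
  by_cases ht1 : t = 1
  · omega
  -- t ≥ 2
  have ht2 : 2 ≤ t := by omega
  obtain ⟨σ, hσmem, hσsum⟩ := aux_walk_perm G hconn hreg h3 h4 hb p
  rw [hp] at hσsum
  set su := insert u (G.neighborFinset u) with hsu
  set sw := insert w (G.neighborFinset w) with hsw
  have hcards : su.card = d + 1 ∧ sw.card = d + 1 := by
    constructor <;>
      rw [Finset.card_insert_of_notMem (G.notMem_neighborFinset_self _),
        card_neighborFinset_eq_degree, hreg _]
  have himg : su.image σ = sw := by
    apply Finset.eq_of_subset_of_card_le
    · intro a haa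
      obtain ⟨v, hv, rfl⟩ := Finset.mem_image.mp haa
      exact hσmem v hv
    · rw [Finset.card_image_of_injective _ σ.injective, hcards.1, hcards.2]
  have hwmem : w ∈ su.image σ := himg ▸ Finset.mem_insert_self w _
  obtain ⟨v₀, hv₀mem, hv₀eq⟩ := Finset.mem_image.mp hwmem
  have hlow : ∀ v ∈ su, (t - 2) + ((if v = u then 1 else 0) + (if v = v₀ then 1 else 0))
      ≤ G.dist v (σ v) := by
    intro v hv
    have htri : t ≤ G.dist u v + (G.dist v (σ v) + G.dist (σ v) w) := by
      rw [← huw]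
      exact le_trans hconn.dist_triangle (Nat.add_le_add_left hconn.dist_triangle _)
    have hb1 : G.dist u v ≤ 1 := by
      rcases Finset.mem_insert.mp hv with hcase | hcase
      · rw [hcase, SimpleGraph.dist_self]; omega
      · exact le_of_eq (SimpleGraph.dist_eq_one_iff_adj.mpr ((mem_neighborFinset G u v).mp hcase))
    have hb2 : G.dist (σ v) w ≤ 1 := by
      rcases Finset.mem_insert.mp (hσmem v hv) with hcase | hcase
      · rw [hcase, SimpleGraph.dist_self]; omega
      · rw [SimpleGraph.dist_comm]
        exact le_of_eq (SimpleGraph.dist_eq_one_iff_adj.mpr ((mem_neighborFinset G w (σ v)).mp hcase))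
    have hz1 : v = u → G.dist u v = 0 := fun e => by rw [e, SimpleGraph.dist_self]
    have hz2 : v = v₀ → G.dist (σ v) w = 0 := fun e => by rw [e, hv₀eq, SimpleGraph.dist_self]
    split_ifs with e1 e2 e3
    · have := hz1 e1; have := hz2 e2; omega
    · have := hz1 e1; omega
    · have := hz2 e3; omega
    · omega
  have hsum_low : (t - 2) * (d + 1) + 2 ≤ ∑ v ∈ su, G.dist v (σ v) := by
    have hle := Finset.sum_le_sum hlow
    have e0 : ∑ _v ∈ su, (t - 2) = (t - 2) * (d + 1) := by
      rw [Finset.sum_const, smul_eq_mul, hcards.1, mul_comm]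
    have e1 : ∑ v ∈ su, (if v = u then 1 else 0) = 1 := by
      rw [Finset.sum_ite_eq' su u (fun _ => 1), if_pos (Finset.mem_insert_self u _)]
    have e2 : ∑ v ∈ su, (if v = v₀ then 1 else 0) = 1 := by
      rw [Finset.sum_ite_eq' su v₀ (fun _ => 1), if_pos hv₀mem]
    calc (t - 2) * (d + 1) + 2
        = (∑ _v ∈ su, (t - 2))
          + ((∑ v ∈ su, (if v = u then 1 else 0)) + ∑ v ∈ su, (if v = v₀ then 1 else 0)) := by
          rw [e0, e1, e2]
      _ = ∑ v ∈ su, ((t - 2) + ((if v = u then 1 else 0) + (if v = v₀ then 1 else 0))) := by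
          rw [Finset.sum_add_distrib, Finset.sum_add_distrib]
      _ ≤ ∑ v ∈ su, G.dist v (σ v) := hle
  have hcomb : (t - 2) * (d + 1) + 2 ≤ t * (d - 2) := le_trans hsum_low hσsum
  zify [ht2, hd2] at hcomb
  zify
  nlinarith [hcomb]
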